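/- Let U be a finite set of size k ≥ 1, let 0 < α < 1, 0 < δ < 1, 1 ≤ s ≤ k, and let S_1, …, S_t be independent uniformly random s-element subsets of U. For T ⊆ U, say that S_i has an unusual intersection with T if either (|T| ≥ δk and |S_i ∩ T| ∉ [(1−α)·s·|T|/k, (1+α)·s·|T|/k]) or (|T| < δk and |S_i ∩ T| > (1+α)·δ·s). Then the probability that there exists some subset T ⊆ U such that more than 4·t·exp(−α²·δ·s/3) of the sets S_1, …, S_t have an unusual intersection with T is at most 2^k · exp(−(t/3)·exp(−α²·δ·s/3)). -/

import Mathlib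

open Finset

/-- `S` has an *unusual intersection* with `T` (within a universe `U` of size `k`,
with parameters `α`, `δ` and sample size `s`) if either `|T| ≥ δk` and
`|S ∩ T| ∉ [(1−α)·s·|T|/k, (1+α)·s·|T|/k]`, or `|T| < δk` and `|S ∩ T| > (1+α)·δ·s`. -/
def UnusualIntersection {U : Type*} [Fintype U] [DecidableEq U]
    (α δ : ℝ) (s : ℕ) (T S : Finset U) : Prop :=
  (δ * Fintype.card U ≤ (T.card : ℝ) ∧
      ((S ∩ T).card : ℝ) ∉
        Set.Icc ((1 - α) * s * T.card / Fintype.card U)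
          ((1 + α) * s * T.card / Fintype.card U)) ∨
  ((T.card : ℝ) < δ * Fintype.card U ∧ (1 + α) * δ * s < ((S ∩ T).card : ℝ))

noncomputable instance {U : Type*} [Fintype U] [DecidableEq U] (α δ : ℝ) (s : ℕ)
    (T S : Finset U) : Decidable (UnusualIntersection α δ s T S) := by
  unfold UnusualIntersection; infer_instance


private lemma pow_step (a b : ℝ) (ha : 0 ≤ a) (hb : 0 ≤ b) (n : ℕ) :
    b ^ n * (a + n * (a - b)) ≤ a ^ (n + 1) := by
  induction n with
  | zero => simp
  | succ n ih =>
    have h1 : a * (b ^ n * (a + n * (a - b))) ≤ a * a ^ (n + 1) :=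
      mul_le_mul_of_nonneg_left ih ha
    have hbn : (0:ℝ) ≤ b ^ n := pow_nonneg hb n
    have hn : (0:ℝ) ≤ (n : ℝ) := Nat.cast_nonneg n
    have key : b ^ n * b * (a + ((n:ℝ)+1) * (a - b))
        ≤ a * (b ^ n * (a + n * (a - b))) := by
      nlinarith [mul_nonneg hbn (sq_nonneg (a-b)), mul_nonneg (mul_nonneg hn hbn) (sq_nonneg (a-b))]
    calc b ^ (n+1) * (a + ((n+1:ℕ):ℝ) * (a - b))
        = b ^ n * b * (a + ((n:ℝ)+1) * (a - b)) := by push_cast; ring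
      _ ≤ a * (b ^ n * (a + n * (a - b))) := key
      _ ≤ a * a ^ (n+1) := h1
      _ = a ^ (n+1+1) := by ring

private lemma step_num (k m n : ℕ) (z : ℝ) (hz : 0 < z)
    (hm : 1 ≤ m) (hmk : m ≤ k) (hsk : n + 1 ≤ k) :
    ((k-1).choose (n+1) : ℝ) * (1 + ((m-1:ℕ):ℝ)/((k-1:ℕ):ℝ) * (z-1)) ^ (n+1)
      + z * (((k-1).choose n : ℝ) * (1 + ((m-1:ℕ):ℝ)/((k-1:ℕ):ℝ) * (z-1)) ^ n)
    ≤ (k.choose (n+1) : ℝ) * (1 + (m:ℝ)/(k:ℝ) * (z-1)) ^ (n+1) := by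
  have hk1 : 1 ≤ k := le_trans hm hmk
  rcases eq_or_lt_of_le hk1 with hk | hk2
  · -- k = 1
    obtain rfl : k = 1 := hk.symm
    obtain rfl : m = 1 := le_antisymm hmk hm
    obtain rfl : n = 0 := by omega
    norm_num
  · -- k ≥ 2
    have hk2' : 2 ≤ k := hk2
    have hkR : (0:ℝ) < (k:ℝ) := by positivity
    have hk1R : (0:ℝ) < (k:ℝ) - 1 := by
      have : (2:ℝ) ≤ (k:ℝ) := by exact_mod_cast hk2'
      linarith
    -- casts of nat subtraction
    have hcm : ((m-1:ℕ):ℝ) = (m:ℝ) - 1 := by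
      have := Nat.cast_sub hm (R := ℝ); simpa using this
    have hck : ((k-1:ℕ):ℝ) = (k:ℝ) - 1 := by
      have := Nat.cast_sub hk1 (R := ℝ); simpa using this
    rw [hcm, hck]
    set b : ℝ := 1 + ((m:ℝ)-1)/((k:ℝ)-1) * (z-1) with hbdef
    set g : ℝ := 1 + (m:ℝ)/(k:ℝ) * (z-1) with hgdef
    have hmR : (1:ℝ) ≤ (m:ℝ) := by exact_mod_cast hm
    have hmkR : (m:ℝ) ≤ (k:ℝ) := by exact_mod_cast hmk
    have hb : 0 ≤ b := by
      rw [hbdef]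
      rcases le_or_gt z 1 with h | h
      · have h1 : ((m:ℝ)-1)/((k:ℝ)-1) ≤ 1 := by
          rw [div_le_one hk1R]; linarith
        nlinarith [div_nonneg (by linarith : (0:ℝ) ≤ (m:ℝ)-1) hk1R.le]
      · nlinarith [div_nonneg (by linarith : (0:ℝ) ≤ (m:ℝ)-1) hk1R.le]
    have hg : 0 ≤ g := by
      rw [hgdef]
      rcases le_or_gt z 1 with h | h
      · have h1 : (m:ℝ)/(k:ℝ) ≤ 1 := by rw [div_le_one hkR]; linarith
        nlinarith [div_nonneg (by linarith : (0:ℝ) ≤ (m:ℝ)) hkR.le]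
      · nlinarith [div_nonneg (by linarith : (0:ℝ) ≤ (m:ℝ)) hkR.le]
    -- binomial identities
    have hPascal : (k.choose (n+1) : ℝ)
        = ((k-1).choose (n+1) : ℝ) + ((k-1).choose n : ℝ) := by
      have h := Nat.choose_succ_succ (k-1) n
      have hks : k = (k-1) + 1 := by omega
      rw [hks]
      push_cast [h]
      ring
    have hmul : (k:ℝ) * ((k-1).choose n : ℝ) = ((n:ℝ)+1) * (k.choose (n+1) : ℝ) := by
      have h := Nat.add_one_mul_choose_eq (k-1) n
      have hks : (k-1) + 1 = k := by omega
      rw [hks] at h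
      have : (k * (k-1).choose n : ℕ) = (k.choose (n+1) * (n+1) : ℕ) := by
        simpa using h
      exact_mod_cast by rw [this]; push_cast; ring
    have hC : (0:ℝ) < (k.choose (n+1) : ℝ) := by
      exact_mod_cast Nat.choose_pos hsk
    set C : ℝ := (k.choose (n+1) : ℝ)
    -- express choices
    have hc2 : ((k-1).choose n : ℝ) = ((n:ℝ)+1) * C / k := by
      field_simp
      linarith [hmul]
    have hc1 : ((k-1).choose (n+1) : ℝ) = C - ((n:ℝ)+1) * C / k := by
      rw [← hc2]; linarith [hPascal]
    rw [hc1, hc2]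
    -- key identity and pow_step
    have key : ((k:ℝ) - ((n:ℝ)+1)) * b + ((n:ℝ)+1) * z = (k:ℝ) * (g + n * (g - b)) := by
      rw [hbdef, hgdef]
      field_simp
      ring
    have hstep : b ^ n * (g + n * (g - b)) ≤ g ^ (n + 1) := pow_step g b hg hb n
    -- final arithmetic: multiply by C/k etc.
    have hgoal : (C - ((n:ℝ)+1) * C / k) * b ^ (n+1) + z * (((n:ℝ)+1) * C / k * b ^ n)
        ≤ C * g ^ (n+1) := by
      have h2 : b ^ n * ((k:ℝ) * (g + n * (g - b))) ≤ (k:ℝ) * g ^ (n+1) := by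
        have h := mul_le_mul_of_nonneg_left hstep hkR.le
        rw [mul_left_comm]
        exact h
      have h3 : b ^ n * (((k:ℝ) - ((n:ℝ)+1)) * b + ((n:ℝ)+1) * z) ≤ (k:ℝ) * g ^ (n+1) := by
        rw [key]; exact h2
      have h4 := mul_le_mul_of_nonneg_left h3 (le_of_lt (div_pos hC hkR))
      calc (C - ((n:ℝ)+1) * C / k) * b ^ (n+1) + z * (((n:ℝ)+1) * C / k * b ^ n)
          = C / k * (b ^ n * (((k:ℝ) - ((n:ℝ)+1)) * b + ((n:ℝ)+1) * z)) := by
            field_simp; ring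
        _ ≤ C / k * ((k:ℝ) * g ^ (n+1)) := h4
        _ = C * g ^ (n+1) := by field_simp
    exact hgoal

private lemma ratio_b_nonneg {z : ℝ} (hz : 0 < z) {a c : ℕ} (hac : a ≤ c) :
    0 ≤ 1 + (a:ℝ)/(c:ℝ) * (z-1) := by
  rcases Nat.eq_zero_or_pos c with rfl | hc
  · simp
  · have hcR : (0:ℝ) < c := by exact_mod_cast hc
    have h0 : (0:ℝ) ≤ (a:ℝ)/(c:ℝ) := by positivity
    have h1 : (a:ℝ)/(c:ℝ) ≤ 1 := by
      rw [div_le_one hcR]; exact_mod_cast hac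
    rcases le_or_gt z 1 with h | h
    · nlinarith
    · nlinarith

private lemma mgf_sum {U : Type*} [DecidableEq U] (z : ℝ) (hz : 0 < z) (V : Finset U) :
    ∀ T : Finset U, T ⊆ V → ∀ s : ℕ, s ≤ V.card →
      ∑ S ∈ V.powersetCard s, z ^ (S ∩ T).card
        ≤ (V.card.choose s : ℝ) * (1 + ((T.card : ℝ)/(V.card : ℝ)) * (z - 1)) ^ s := by
  induction V using Finset.strongInduction with
  | _ V ih =>
  intro T hTV s hsV
  rcases T.eq_empty_or_nonempty with rfl | ⟨u, hu⟩
  · simp only [inter_empty, card_empty, pow_zero, sum_const, nsmul_eq_mul, mul_one,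
      Nat.cast_zero, zero_div, zero_mul, add_zero, one_pow]
    rw [Finset.card_powersetCard]
  · rcases s with _ | n
    · simp
    -- s = n+1, T nonempty
    have huV : u ∈ V := hTV hu
    set V' := V.erase u with hV'
    set T' := T.erase u with hT'
    have hsplit : V.powersetCard (n+1)
        = V'.powersetCard (n+1) ∪ (V'.powersetCard n).image (insert u) := by
      conv_lhs => rw [← Finset.insert_erase huV]
      exact Finset.powersetCard_succ_insert (Finset.notMem_erase _ _) n
    have hnotmem : ∀ S ∈ V'.powersetCard n, u ∉ S := fun S hS huS =>
      Finset.notMem_erase u V ((Finset.mem_powersetCard.1 hS).1 huS)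
    have hnotmem' : ∀ S ∈ V'.powersetCard (n+1), u ∉ S := fun S hS huS =>
      Finset.notMem_erase u V ((Finset.mem_powersetCard.1 hS).1 huS)
    have hdisj : Disjoint (V'.powersetCard (n+1)) ((V'.powersetCard n).image (insert u)) := by
      rw [Finset.disjoint_left]
      intro S hS hS'
      obtain ⟨S', _, rfl⟩ := Finset.mem_image.1 hS'
      exact hnotmem' _ hS (Finset.mem_insert_self u S')
    have hinj : Set.InjOn (insert u) (V'.powersetCard n : Set (Finset U)) := by
      intro x hx y hy hxy
      rw [Finset.mem_coe] at hx hy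
      have hux : u ∉ x := hnotmem _ hx
      have huy : u ∉ y := hnotmem _ hy
      rw [← Finset.erase_insert hux, hxy, Finset.erase_insert huy]
    have hcardV' : V'.card = V.card - 1 := Finset.card_erase_of_mem huV
    have hcardT' : T'.card = T.card - 1 := Finset.card_erase_of_mem hu
    have hT'V' : T' ⊆ V' := Finset.erase_subset_erase u hTV
    -- rewrite card intersections
    have hint : ∀ S : Finset U, u ∉ S → S ∩ T = S ∩ T' := by
      intro S huS
      ext a
      simp only [Finset.mem_inter, hT', Finset.mem_erase]
      constructor
      · rintro ⟨ha, ha'⟩; exact ⟨ha, fun h => huS (h ▸ ha), ha'⟩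
      · rintro ⟨ha, _, ha'⟩; exact ⟨ha, ha'⟩
    have hint2 : ∀ S : Finset U, u ∉ S → (insert u S ∩ T).card = (S ∩ T').card + 1 := by
      intro S huS
      have : insert u S ∩ T = insert u (S ∩ T') := by
        ext a
        simp only [Finset.mem_inter, Finset.mem_insert, hT', Finset.mem_erase]
        constructor
        · rintro ⟨rfl | ha, haT⟩
          · exact Or.inl rfl
          · rcases eq_or_ne a u with rfl | hne
            · exact Or.inl rfl
            · exact Or.inr ⟨ha, hne, haT⟩
        · rintro (rfl | ⟨ha, _, haT⟩)
          · exact ⟨Or.inl rfl, hu⟩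
          · exact ⟨Or.inr ha, haT⟩
      rw [this, Finset.card_insert_of_notMem]
      intro h
      exact huS (Finset.mem_inter.1 h).1
    rw [hsplit, Finset.sum_union hdisj, Finset.sum_image hinj]
    have e1 : ∑ S ∈ V'.powersetCard (n+1), z ^ (S ∩ T).card
        = ∑ S ∈ V'.powersetCard (n+1), z ^ (S ∩ T').card := by
      apply Finset.sum_congr rfl
      intro S hS; rw [hint S (hnotmem' S hS)]
    have e2 : ∑ S ∈ V'.powersetCard n, z ^ (insert u S ∩ T).card
        = z * ∑ S ∈ V'.powersetCard n, z ^ (S ∩ T').card := by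
      rw [Finset.mul_sum]
      apply Finset.sum_congr rfl
      intro S hS
      rw [hint2 S (hnotmem S hS), pow_succ]
      ring
    rw [e1, e2]
    -- apply IH
    have hV'ss : V' ⊂ V := Finset.erase_ssubset huV
    have hkV : 1 ≤ V.card := Finset.card_pos.2 ⟨u, huV⟩
    have hnV' : n ≤ V'.card := by omega
    have B2 : ∑ S ∈ V'.powersetCard n, z ^ (S ∩ T').card
        ≤ (V'.card.choose n : ℝ) * (1 + ((T'.card : ℝ)/(V'.card : ℝ)) * (z - 1)) ^ n :=
      ih V' hV'ss T' hT'V' n hnV'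
    have B1 : ∑ S ∈ V'.powersetCard (n+1), z ^ (S ∩ T').card
        ≤ (V'.card.choose (n+1) : ℝ) * (1 + ((T'.card : ℝ)/(V'.card : ℝ)) * (z - 1)) ^ (n+1) := by
      rcases le_or_gt (n+1) V'.card with h | h
      · exact ih V' hV'ss T' hT'V' (n+1) h
      · rw [Finset.powersetCard_eq_empty.2 h, Finset.sum_empty]
        have hb := ratio_b_nonneg hz (Finset.card_le_card hT'V')
        positivity
    have hm1 : 1 ≤ T.card := Finset.card_pos.2 ⟨u, hu⟩
    have hmk : T.card ≤ V.card := Finset.card_le_card hTV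
    have hbig := step_num V.card T.card n z hz hm1 hmk hsV
    have hz' : 0 ≤ z := hz.le
    calc ∑ S ∈ V'.powersetCard (n+1), z ^ (S ∩ T').card
          + z * ∑ S ∈ V'.powersetCard n, z ^ (S ∩ T').card
        ≤ (V'.card.choose (n+1) : ℝ) * (1 + ((T'.card : ℝ)/(V'.card : ℝ)) * (z - 1)) ^ (n+1)
          + z * ((V'.card.choose n : ℝ) * (1 + ((T'.card : ℝ)/(V'.card : ℝ)) * (z - 1)) ^ n) := by
          gcongr
      _ ≤ (V.card.choose (n+1) : ℝ) * (1 + ((T.card : ℝ)/(V.card : ℝ)) * (z - 1)) ^ (n+1) := by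
          rw [hcardV', hcardT']
          exact hbig

private lemma tail_upper {U : Type*} [Fintype U] [DecidableEq U] (T : Finset U) (s : ℕ)
    (hs : s ≤ Fintype.card U) (z a : ℝ) (hz : 1 ≤ z) :
    (((((univ : Finset U).powersetCard s)).filter (fun S => a < ((S ∩ T).card : ℝ))).card : ℝ)
        * z ^ a
      ≤ ((Fintype.card U).choose s : ℝ)
        * (1 + ((T.card : ℝ)/((Fintype.card U) : ℝ)) * (z - 1)) ^ s := by
  have hz0 : (0:ℝ) < z := lt_of_lt_of_le one_pos hz
  have hmgf := mgf_sum z hz0 (univ : Finset U) T (subset_univ T) s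
    (by simpa [Finset.card_univ] using hs)
  rw [Finset.card_univ] at hmgf
  calc (((((univ : Finset U).powersetCard s)).filter
          (fun S => a < ((S ∩ T).card : ℝ))).card : ℝ) * z ^ a
      = ∑ _S ∈ (((univ : Finset U).powersetCard s)).filter
          (fun S => a < ((S ∩ T).card : ℝ)), z ^ a := by
        rw [Finset.sum_const, nsmul_eq_mul]
    _ ≤ ∑ S ∈ (((univ : Finset U).powersetCard s)).filter
          (fun S => a < ((S ∩ T).card : ℝ)), z ^ (S ∩ T).card := by
        apply Finset.sum_le_sum
        intro S hS
        have hlt := (Finset.mem_filter.1 hS).2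
        have := Real.rpow_le_rpow_of_exponent_le hz hlt.le
        rwa [Real.rpow_natCast] at this
    _ ≤ ∑ S ∈ ((univ : Finset U).powersetCard s), z ^ (S ∩ T).card := by
        apply Finset.sum_le_sum_of_subset_of_nonneg (Finset.filter_subset _ _)
        intro S _ _
        positivity
    _ ≤ _ := hmgf

private lemma tail_lower {U : Type*} [Fintype U] [DecidableEq U] (T : Finset U) (s : ℕ)
    (hs : s ≤ Fintype.card U) (z a : ℝ) (hz0 : 0 < z) (hz1 : z ≤ 1) :
    (((((univ : Finset U).powersetCard s)).filter (fun S => ((S ∩ T).card : ℝ) < a)).card : ℝ)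
        * z ^ a
      ≤ ((Fintype.card U).choose s : ℝ)
        * (1 + ((T.card : ℝ)/((Fintype.card U) : ℝ)) * (z - 1)) ^ s := by
  have hmgf := mgf_sum z hz0 (univ : Finset U) T (subset_univ T) s
    (by simpa [Finset.card_univ] using hs)
  rw [Finset.card_univ] at hmgf
  calc (((((univ : Finset U).powersetCard s)).filter
          (fun S => ((S ∩ T).card : ℝ) < a)).card : ℝ) * z ^ a
      = ∑ _S ∈ (((univ : Finset U).powersetCard s)).filter
          (fun S => ((S ∩ T).card : ℝ) < a), z ^ a := by
        rw [Finset.sum_const, nsmul_eq_mul]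
    _ ≤ ∑ S ∈ (((univ : Finset U).powersetCard s)).filter
          (fun S => ((S ∩ T).card : ℝ) < a), z ^ (S ∩ T).card := by
        apply Finset.sum_le_sum
        intro S hS
        have hlt := (Finset.mem_filter.1 hS).2
        have := Real.rpow_le_rpow_of_exponent_ge hz0 hz1 hlt.le
        rwa [Real.rpow_natCast] at this
    _ ≤ ∑ S ∈ ((univ : Finset U).powersetCard s), z ^ (S ∩ T).card := by
        apply Finset.sum_le_sum_of_subset_of_nonneg (Finset.filter_subset _ _)
        intro S _ _
        positivity
    _ ≤ _ := hmgf

private lemma key2 (b : ℝ) (hb0 : 0 < b) (hb2 : b ≤ 1/2) (h1b : 0 < 1-b) :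
    (b^2/3 + b^7) / (1-b) ≤ b^2/2 + b^3/3 + b^4/4 + b^5/5 + b^6/6 := by
  rw [div_le_iff₀ h1b]
  have hp2 : b^2 ≤ (1/2) * b := by nlinarith
  have hp3 : b^3 ≤ (1/2)*b^2 := by nlinarith [sq_nonneg b]
  have hp4 : b^4 ≤ (1/2)*b^3 := by nlinarith [pow_pos hb0 3]
  have hp5 : b^5 ≤ (1/2)*b^4 := by nlinarith [pow_pos hb0 4]
  have hp6 : b^6 ≤ (1/2)*b^5 := by nlinarith [pow_pos hb0 5]
  have hp7 : b^7 ≤ (1/2)*b^6 := by nlinarith [pow_pos hb0 6]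
  have h4' : b^4 ≤ (1/4)*b^2 := by linarith
  have h5' : b^5 ≤ (1/8)*b^2 := by linarith
  have h6' : b^6 ≤ (1/16)*b^2 := by linarith
  have h7' : b^7 ≤ (1/32)*b^2 := by linarith
  nlinarith [hp3, h4', h5', h6', h7']

private lemma log_one_sub_ge (b : ℝ) (hb0 : 0 < b) (hb2 : b ≤ 1/2) :
    b + b^2/(3*(1-b)) ≤ - Real.log (1 - b) := by
  have h1b : (0:ℝ) < 1 - b := by linarith
  have hb1 : |b| < 1 := by rw [abs_of_pos hb0]; linarith
  have htaylor := Real.abs_log_sub_add_sum_range_le hb1 6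
  have hsum : ∑ i ∈ range 6, b ^ (i+1) / ((i:ℝ)+1)
      = b + b^2/2 + b^3/3 + b^4/4 + b^5/5 + b^6/6 := by
    rw [show (6:ℕ) = 5+1 from rfl, Finset.sum_range_succ, Finset.sum_range_succ,
      Finset.sum_range_succ, Finset.sum_range_succ, Finset.sum_range_succ,
      Finset.sum_range_succ, Finset.sum_range_zero]
    norm_num
  rw [abs_of_pos hb0] at htaylor
  have habs := (abs_le.1 htaylor).2
  rw [hsum] at habs
  have hpow : b^(6+1) = b^7 := rfl
  rw [hpow] at habs
  -- habs : sum + log(1-b) ≤ b^7/(1-b)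
  have hkey := key2 b hb0 hb2 h1b
  have hsplit : b^2/(3*(1-b)) + b^7/(1-b) = (b^2/3 + b^7)/(1-b) := by
    field_simp
    skip
  linarith [hkey, habs, hsplit]

private lemma L1 {α : ℝ} (h0 : 0 < α) (h1 : α ≤ 1) :
    α + α^2/3 ≤ (1+α) * Real.log (1+α) := by
  have hα1 : (0:ℝ) < 1 + α := by linarith
  have hb0 : 0 < α / (1+α) := div_pos h0 hα1
  have hb2 : α / (1+α) ≤ 1/2 := by
    rw [div_le_div_iff₀ hα1 (by norm_num)]
    linarith
  have hfin := log_one_sub_ge (α/(1+α)) hb0 hb2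
  have hlog : Real.log (1 - α/(1+α)) = - Real.log (1+α) := by
    have h : 1 - α/(1+α) = (1+α)⁻¹ := by field_simp; ring
    rw [h, Real.log_inv]
  rw [hlog, neg_neg] at hfin
  have hid : (1+α) * (α/(1+α) + (α/(1+α))^2/(3*(1-α/(1+α)))) = α + α^2/3 := by
    rw [show (1 - α/(1+α)) = 1/(1+α) by field_simp; ring]
    field_simp
    skip
  calc α + α^2/3 = (1+α) * (α/(1+α) + (α/(1+α))^2/(3*(1-α/(1+α)))) := hid.symm
    _ ≤ (1+α) * Real.log (1+α) := mul_le_mul_of_nonneg_left hfin hα1.le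

private lemma L2 {α : ℝ} (h0 : 0 < α) (h1 : α < 1) :
    -α + α^2/3 ≤ (1-α) * Real.log (1-α) := by
  have h1α : (0:ℝ) < 1 - α := by linarith
  set v : ℝ := (1-α) ^ ((1:ℝ)/4) with hvdef
  have hv0 : 0 < v := Real.rpow_pos_of_pos h1α _
  have hv4 : v ^ (4:ℕ) = 1 - α := by
    rw [hvdef, ← Real.rpow_natCast ((1-α) ^ ((1:ℝ)/4)) 4, ← Real.rpow_mul h1α.le]
    norm_num
  have hv1 : v < 1 := by
    nlinarith [pow_pos hv0 2, pow_pos hv0 3]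
  have hlogv : Real.log (1-α) = 4 * Real.log v := by
    rw [← hv4, Real.log_pow]
    norm_num
  have hlb : 1 - 1/v ≤ Real.log v := by
    have h := Real.log_le_sub_one_of_pos (show (0:ℝ) < 1/v by positivity)
    rw [Real.log_div one_ne_zero hv0.ne', Real.log_one] at h
    have : -Real.log v ≤ 1/v - 1 := by linarith
    linarith
  -- (1-α) log(1-α) = v^4 * 4 log v ≥ 4 v^4 (1 - 1/v) = 4v^4 - 4v^3
  have hstep : 4*v^4 - 4*v^3 ≤ (1-α) * Real.log (1-α) := by
    rw [hlogv, ← hv4]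
    have h := mul_le_mul_of_nonneg_left hlb (by positivity : (0:ℝ) ≤ 4 * v^(4:ℕ))
    calc 4*v^4 - 4*v^3 = 4*v^(4:ℕ) * (1 - 1/v) := by field_simp
      _ ≤ 4*v^(4:ℕ) * Real.log v := h
      _ = v^(4:ℕ) * (4 * Real.log v) := by ring
  have hα : α = 1 - v^4 := by
    have := hv4
    linarith
  have hv0' : (0:ℝ) ≤ v := hv0.le
  have hle3 : v^3 ≤ v^2 := pow_le_pow_of_le_one hv0' hv1.le (by norm_num)
  have hle4 : v^4 ≤ v^2 := pow_le_pow_of_le_one hv0' hv1.le (by norm_num)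
  have hle5 : v^5 ≤ v^2 := pow_le_pow_of_le_one hv0' hv1.le (by norm_num)
  have hle6 : v^6 ≤ v^2 := pow_le_pow_of_le_one hv0' hv1.le (by norm_num)
  have hq : 0 ≤ -v^6-2*v^5-3*v^4-4*v^3+6*v^2+4*v+2 := by nlinarith [sq_nonneg v]
  have hid2 : (4*v^4-4*v^3) - (-(1-v^4) + (1-v^4)^2/3)
      = (1-v)^2 * (-v^6-2*v^5-3*v^4-4*v^3+6*v^2+4*v+2) / 3 := by ring
  have hpoly : -α + α^2/3 ≤ 4*v^4 - 4*v^3 := by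
    rw [hα]
    nlinarith [mul_nonneg (sq_nonneg (1-v)) hq]
  linarith

/-- generic conversion: from `card * z^a ≤ C * g^s` with `g ≤ exp w` to
`card ≤ C * exp (w*s - a * log z)`. -/
private lemma convert_bound (card C z a g w : ℝ) (s : ℕ)
    (hcard : 0 ≤ card) (hC : 0 ≤ C) (hz : 0 < z) (hg : 0 ≤ g)
    (h : card * z ^ a ≤ C * g ^ s) (hgw : g ≤ Real.exp w) :
    card ≤ C * Real.exp (w * s - a * Real.log z) := by
  have hza : (0:ℝ) < z ^ a := Real.rpow_pos_of_pos hz a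
  have hgs : g ^ s ≤ Real.exp (w * s) := by
    calc g ^ s ≤ (Real.exp w) ^ s := pow_le_pow_left₀ hg hgw s
      _ = Real.exp (w * s) := by rw [← Real.exp_nat_mul]; ring_nf
  have h2 : card * z ^ a ≤ C * Real.exp (w * s) :=
    le_trans h (mul_le_mul_of_nonneg_left hgs hC)
  have hzaeq : z ^ a = Real.exp (a * Real.log z) := by
    rw [Real.rpow_def_of_pos hz]; ring_nf
  rw [hzaeq] at h2
  have h3 : card ≤ C * Real.exp (w * s) / Real.exp (a * Real.log z) := by
    rw [le_div_iff₀ (Real.exp_pos _)]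
    exact h2
  calc card ≤ C * Real.exp (w * s) / Real.exp (a * Real.log z) := h3
    _ = C * Real.exp (w * s - a * Real.log z) := by
        rw [Real.exp_sub]; ring


private lemma count_exp_upper {U : Type*} [Fintype U] [DecidableEq U] (T : Finset U) (s : ℕ)
    (hs : s ≤ Fintype.card U) (z a : ℝ) (hz : 1 ≤ z) :
    (((((univ : Finset U).powersetCard s)).filter (fun S => a < ((S ∩ T).card : ℝ))).card : ℝ)
      ≤ ((Fintype.card U).choose s : ℝ)
        * Real.exp (((T.card : ℝ)/((Fintype.card U) : ℝ)) * (z-1) * (s:ℝ) - a * Real.log z) := by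
  have hf0 : (0:ℝ) ≤ (T.card : ℝ)/((Fintype.card U) : ℝ) := by positivity
  have hg0 : (0:ℝ) ≤ 1 + ((T.card : ℝ)/((Fintype.card U) : ℝ)) * (z - 1) := by nlinarith
  have hgw : 1 + ((T.card : ℝ)/((Fintype.card U) : ℝ)) * (z - 1)
      ≤ Real.exp (((T.card : ℝ)/((Fintype.card U) : ℝ)) * (z-1)) := by
    have h := Real.add_one_le_exp (((T.card : ℝ)/((Fintype.card U) : ℝ)) * (z-1))
    linarith
  exact convert_bound _ _ z a _ _ s (by positivity) (by positivity)
    (lt_of_lt_of_le one_pos hz) hg0 (tail_upper T s hs z a hz) hgw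

private lemma count_exp_lower {U : Type*} [Fintype U] [DecidableEq U] (T : Finset U) (s : ℕ)
    (hs : s ≤ Fintype.card U) (z a : ℝ) (hz0 : 0 < z) (hz1 : z ≤ 1)
    (hg0 : (0:ℝ) ≤ 1 + ((T.card : ℝ)/((Fintype.card U) : ℝ)) * (z - 1)) :
    (((((univ : Finset U).powersetCard s)).filter (fun S => ((S ∩ T).card : ℝ) < a)).card : ℝ)
      ≤ ((Fintype.card U).choose s : ℝ)
        * Real.exp (((T.card : ℝ)/((Fintype.card U) : ℝ)) * (z-1) * (s:ℝ) - a * Real.log z) := by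
  have hgw : 1 + ((T.card : ℝ)/((Fintype.card U) : ℝ)) * (z - 1)
      ≤ Real.exp (((T.card : ℝ)/((Fintype.card U) : ℝ)) * (z-1)) := by
    have h := Real.add_one_le_exp (((T.card : ℝ)/((Fintype.card U) : ℝ)) * (z-1))
    linarith
  exact convert_bound _ _ z a _ _ s (by positivity) (by positivity)
    hz0 hg0 (tail_lower T s hs z a hz0 hz1) hgw

private lemma expo_up {α δ sR f a : ℝ} (hα0 : 0 < α) (hα1 : α ≤ 1) (hδ0 : 0 < δ)
    (hs : 0 ≤ sR) (hf0 : 0 ≤ f) (hδf : δ ≤ f) (ha : a = (1+α)*sR*f) :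
    f*((1+α)-1)*sR - a * Real.log (1+α) ≤ -(α^2*δ*sR)/3 := by
  subst ha
  have hL := L1 hα0 hα1
  have hμ0 : 0 ≤ f*sR := mul_nonneg hf0 hs
  have h2 : (f*sR)*(α+α^2/3) ≤ (f*sR)*((1+α)*Real.log (1+α)) :=
    mul_le_mul_of_nonneg_left hL hμ0
  have h3 : (α^2/3)*(δ*sR) ≤ (α^2/3)*(f*sR) := by
    apply mul_le_mul_of_nonneg_left _ (by positivity)
    exact mul_le_mul_of_nonneg_right hδf hs
  nlinarith [h2, h3]

private lemma expo_small {α δ sR f a : ℝ} (hα0 : 0 < α) (hα1 : α ≤ 1) (hδ0 : 0 < δ)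
    (hs : 0 ≤ sR) (hf0 : 0 ≤ f) (hfδ : f ≤ δ) (ha : a = (1+α)*δ*sR) :
    f*((1+α)-1)*sR - a * Real.log (1+α) ≤ -(α^2*δ*sR)/3 := by
  subst ha
  have hL := L1 hα0 hα1
  have h2 : (δ*sR)*(α+α^2/3) ≤ (δ*sR)*((1+α)*Real.log (1+α)) :=
    mul_le_mul_of_nonneg_left hL (by positivity)
  have h1 : f*(α*sR) ≤ δ*(α*sR) :=
    mul_le_mul_of_nonneg_right hfδ (by positivity)
  nlinarith [h2, h1]

private lemma expo_lo {α δ sR f a : ℝ} (hα0 : 0 < α) (hα1 : α < 1) (hδ0 : 0 < δ)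
    (hs : 0 ≤ sR) (hf0 : 0 ≤ f) (hδf : δ ≤ f) (ha : a = (1-α)*sR*f) :
    f*((1-α)-1)*sR - a * Real.log (1-α) ≤ -(α^2*δ*sR)/3 := by
  subst ha
  have hL := L2 hα0 hα1
  have hμ0 : 0 ≤ f*sR := mul_nonneg hf0 hs
  have h2 : (f*sR)*(-α+α^2/3) ≤ (f*sR)*((1-α)*Real.log (1-α)) :=
    mul_le_mul_of_nonneg_left hL hμ0
  have h3 : (α^2/3)*(δ*sR) ≤ (α^2/3)*(f*sR) := by
    apply mul_le_mul_of_nonneg_left _ (by positivity)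
    exact mul_le_mul_of_nonneg_right hδf hs
  nlinarith [h2, h3]

private lemma bad_count {U : Type*} [Fintype U] [DecidableEq U]
    (α δ : ℝ) (hα0 : 0 < α) (hα1 : α < 1) (hδ0 : 0 < δ) (hδ1 : δ < 1)
    (s : ℕ) (hs1 : 1 ≤ s) (hsk : s ≤ Fintype.card U) (T : Finset U) :
    ((((univ : Finset U).powersetCard s).filter
        (fun S => UnusualIntersection α δ s T S)).card : ℝ)
      ≤ 2 * Real.exp (-(α^2*δ*(s:ℝ))/3) * ((Fintype.card U).choose s : ℝ) := by
  classical
  have hk1 : 1 ≤ Fintype.card U := le_trans hs1 hsk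
  have hkR : (0:ℝ) < ((Fintype.card U):ℝ) := by exact_mod_cast hk1
  have hsR : (0:ℝ) ≤ (s:ℝ) := by positivity
  have hmk : T.card ≤ Fintype.card U := Finset.card_le_univ T
  have hmkR : ((T.card):ℝ) ≤ ((Fintype.card U):ℝ) := by exact_mod_cast hmk
  have hf0 : (0:ℝ) ≤ (T.card:ℝ)/((Fintype.card U):ℝ) := by positivity
  have hf1 : (T.card:ℝ)/((Fintype.card U):ℝ) ≤ 1 := by
    rw [div_le_one hkR]; exact hmkR
  have hC0 : (0:ℝ) ≤ ((Fintype.card U).choose s : ℝ) := by positivity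
  have hq0 : (0:ℝ) < Real.exp (-(α^2*δ*(s:ℝ))/3) := Real.exp_pos _
  rcases lt_or_ge ((T.card : ℝ)) (δ * ((Fintype.card U):ℝ)) with hsmall | hbig
  · -- small case
    have hsub : (((univ : Finset U).powersetCard s).filter
        (fun S => UnusualIntersection α δ s T S))
        ⊆ (((univ : Finset U).powersetCard s).filter
        (fun S => ((1+α)*δ*(s:ℝ)) < ((S ∩ T).card : ℝ))) := by
      intro S hS
      rw [Finset.mem_filter] at hS ⊢
      refine ⟨hS.1, ?_⟩
      rcases hS.2 with ⟨h1, _⟩ | ⟨_, h2⟩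
      · exact absurd h1 (not_le.2 hsmall)
      · exact h2
    have hfδ : (T.card:ℝ)/((Fintype.card U):ℝ) ≤ δ := by
      rw [div_le_iff₀ hkR]; linarith
    have hcnt := count_exp_upper T s hsk (1+α) ((1+α)*δ*(s:ℝ)) (by linarith)
    have hexp := expo_small (a := (1+α)*δ*(s:ℝ)) hα0 hα1.le hδ0 hsR hf0 hfδ rfl
      (f := (T.card:ℝ)/((Fintype.card U):ℝ))
    calc ((((univ : Finset U).powersetCard s).filter
          (fun S => UnusualIntersection α δ s T S)).card : ℝ)
        ≤ ((((univ : Finset U).powersetCard s).filter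
          (fun S => ((1+α)*δ*(s:ℝ)) < ((S ∩ T).card : ℝ))).card : ℝ) := by
          exact_mod_cast Finset.card_le_card hsub
      _ ≤ ((Fintype.card U).choose s : ℝ)
          * Real.exp ((T.card:ℝ)/((Fintype.card U):ℝ)*((1+α)-1)*(s:ℝ)
              - ((1+α)*δ*(s:ℝ)) * Real.log (1+α)) := hcnt
      _ ≤ ((Fintype.card U).choose s : ℝ) * Real.exp (-(α^2*δ*(s:ℝ))/3) :=
          mul_le_mul_of_nonneg_left (Real.exp_le_exp.2 hexp) hC0
      _ ≤ 2 * Real.exp (-(α^2*δ*(s:ℝ))/3) * ((Fintype.card U).choose s : ℝ) := by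
          nlinarith [hq0, hC0]
  · -- big case
    have hδf : δ ≤ (T.card:ℝ)/((Fintype.card U):ℝ) := by
      rw [le_div_iff₀ hkR]; linarith
    have hsub : (((univ : Finset U).powersetCard s).filter
        (fun S => UnusualIntersection α δ s T S))
        ⊆ (((univ : Finset U).powersetCard s).filter
            (fun S => ((S ∩ T).card : ℝ) < (1-α)*(s:ℝ)*(T.card:ℝ)/((Fintype.card U):ℝ)))
          ∪ (((univ : Finset U).powersetCard s).filter
            (fun S => ((1+α)*(s:ℝ)*(T.card:ℝ)/((Fintype.card U):ℝ)) < ((S ∩ T).card : ℝ))) := by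
      intro S hS
      rw [Finset.mem_filter] at hS
      obtain ⟨hSmem, hSu⟩ := hS
      rw [Finset.mem_union, Finset.mem_filter, Finset.mem_filter]
      rcases hSu with ⟨_, h2⟩ | ⟨h1, _⟩
      · rw [Set.mem_Icc, not_and_or, not_le, not_le] at h2
        rcases h2 with h | h
        · exact Or.inl ⟨hSmem, h⟩
        · exact Or.inr ⟨hSmem, h⟩
      · exact absurd h1 (not_lt.2 hbig)
    have hcnt2 := count_exp_upper T s hsk (1+α)
      ((1+α)*(s:ℝ)*(T.card:ℝ)/((Fintype.card U):ℝ)) (by linarith)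
    have hexp2 := expo_up (a := (1+α)*(s:ℝ)*(T.card:ℝ)/((Fintype.card U):ℝ))
      (f := (T.card:ℝ)/((Fintype.card U):ℝ)) hα0 hα1.le hδ0 hsR hf0 hδf (by ring)
    have hg0 : (0:ℝ) ≤ 1 + (T.card:ℝ)/((Fintype.card U):ℝ) * ((1-α) - 1) := by
      nlinarith [hf0, hf1]
    have hcnt1 := count_exp_lower T s hsk (1-α)
      ((1-α)*(s:ℝ)*(T.card:ℝ)/((Fintype.card U):ℝ)) (by linarith) (by linarith) hg0
    have hexp1 := expo_lo (a := (1-α)*(s:ℝ)*(T.card:ℝ)/((Fintype.card U):ℝ))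
      (f := (T.card:ℝ)/((Fintype.card U):ℝ)) hα0 hα1 hδ0 hsR hf0 hδf (by ring)
    have hfin2 : ((((univ : Finset U).powersetCard s).filter
          (fun S => ((1+α)*(s:ℝ)*(T.card:ℝ)/((Fintype.card U):ℝ)) < ((S ∩ T).card : ℝ))).card : ℝ)
        ≤ ((Fintype.card U).choose s : ℝ) * Real.exp (-(α^2*δ*(s:ℝ))/3) :=
      le_trans hcnt2 (mul_le_mul_of_nonneg_left (Real.exp_le_exp.2 hexp2) hC0)
    have hfin1 : ((((univ : Finset U).powersetCard s).filter
          (fun S => ((S ∩ T).card : ℝ) < (1-α)*(s:ℝ)*(T.card:ℝ)/((Fintype.card U):ℝ))).card : ℝ)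
        ≤ ((Fintype.card U).choose s : ℝ) * Real.exp (-(α^2*δ*(s:ℝ))/3) :=
      le_trans hcnt1 (mul_le_mul_of_nonneg_left (Real.exp_le_exp.2 hexp1) hC0)
    have hcard : ((((univ : Finset U).powersetCard s).filter
        (fun S => UnusualIntersection α δ s T S)).card : ℝ)
        ≤ ((((univ : Finset U).powersetCard s).filter
            (fun S => ((S ∩ T).card : ℝ) < (1-α)*(s:ℝ)*(T.card:ℝ)/((Fintype.card U):ℝ))).card : ℝ)
          + ((((univ : Finset U).powersetCard s).filter
            (fun S => ((1+α)*(s:ℝ)*(T.card:ℝ)/((Fintype.card U):ℝ)) < ((S ∩ T).card : ℝ))).card : ℝ) := by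
      exact_mod_cast le_trans (Finset.card_le_card hsub) (Finset.card_union_le _ _)
    nlinarith [hfin1, hfin2, hcard]

private lemma subtype_filter_card {U : Type*} [Fintype U] [DecidableEq U] (s : ℕ)
    (P : Finset U → Prop) [DecidablePred P] :
    (((univ : Finset {A : Finset U // A.card = s}).filter (fun A => P A.1)).card)
      = (((univ : Finset U).powersetCard s).filter P).card := by
  apply Finset.card_bij (fun A _ => A.1)
  · intro A hA
    rw [Finset.mem_filter] at hA ⊢
    exact ⟨Finset.mem_powersetCard_univ.2 A.2, hA.2⟩
  · intro A _ B _ h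
    exact Subtype.ext h
  · intro S hS
    rw [Finset.mem_filter] at hS
    exact ⟨⟨S, Finset.mem_powersetCard_univ.1 hS.1⟩, by simp [hS.2], rfl⟩

private lemma chernoff_tuple {Ω : Type*} [Fintype Ω] [DecidableEq Ω]
    (p : Ω → Prop) [DecidablePred p] (t : ℕ) (q : ℝ) (hq0 : 0 < q)
    (hp : (((univ : Finset Ω).filter p).card : ℝ) ≤ 2*q*(Fintype.card Ω : ℝ)) :
    (((univ : Finset (Fin t → Ω)).filter (fun f =>
        4*(t:ℝ)*q < (((univ : Finset (Fin t)).filter (fun i => p (f i))).card : ℝ))).card : ℝ)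
      ≤ Real.exp (-(t:ℝ)*q/3) * ((Fintype.card Ω : ℝ))^t := by
  classical
  set w : Ω → ℝ := fun x => Real.exp (if p x then 1 else 0) with hwdef
  have hw0 : ∀ x, 0 < w x := fun x => Real.exp_pos _
  set N : ℝ := (Fintype.card Ω : ℝ) with hNdef
  have hN0 : (0:ℝ) ≤ N := by positivity
  set E : ℝ := Real.exp 1 with hEdef
  have hE1 : 1 ≤ E := by
    rw [hEdef]
    nlinarith [Real.add_one_le_exp (1:ℝ)]
  have hEbound : E < 2.7182818286 := Real.exp_one_lt_d9
  -- the sum of weights over Ω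
  have hw_sum : ∑ x : Ω, w x ≤ N * (1 + 2*q*(E-1)) := by
    have h1 : ∑ x : Ω, w x
        = (((univ : Finset Ω).filter p).card : ℝ) * E
          + (((univ : Finset Ω).filter (fun x => ¬ p x)).card : ℝ) := by
      rw [hwdef]
      simp only [apply_ite Real.exp, Real.exp_zero]
      rw [Finset.sum_ite, Finset.sum_const, Finset.sum_const]
      simp [nsmul_eq_mul, hEdef]
    have h2 : (((univ : Finset Ω).filter (fun x => ¬ p x)).card : ℝ)
        = N - (((univ : Finset Ω).filter p).card : ℝ) := by
      rw [hNdef, ← Finset.card_univ]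
      have := Finset.card_filter_add_card_filter_not
        (s := (univ : Finset Ω)) (p := p)
      push_cast [← this]
      ring
    rw [h1, h2]
    have hu0 : (0:ℝ) ≤ (((univ : Finset Ω).filter p).card : ℝ) := by positivity
    nlinarith [hp, hu0, hE1]
  -- product expansion
  have hprod : ∑ f : Fin t → Ω, ∏ i, w (f i) = (∑ x : Ω, w x) ^ t := by
    rw [← Fintype.piFinset_univ, Finset.sum_prod_piFinset]
    rw [Finset.prod_const, Finset.card_univ, Fintype.card_fin]
  -- Markov
  set B := ((univ : Finset (Fin t → Ω)).filter (fun f =>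
      4*(t:ℝ)*q < (((univ : Finset (Fin t)).filter (fun i => p (f i))).card : ℝ))) with hBdef
  have hexp_eq : ∀ f : Fin t → Ω, ∏ i, w (f i)
      = Real.exp ((((univ : Finset (Fin t)).filter (fun i => p (f i))).card : ℝ)) := by
    intro f
    rw [hwdef]
    rw [← Real.exp_sum]
    congr 1
    rw [Finset.sum_boole]
  have hmarkov : ((B.card : ℝ)) * Real.exp (4*(t:ℝ)*q)
      ≤ ∑ f : Fin t → Ω, ∏ i, w (f i) := by
    calc ((B.card : ℝ)) * Real.exp (4*(t:ℝ)*q)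
        = ∑ _f ∈ B, Real.exp (4*(t:ℝ)*q) := by
          rw [Finset.sum_const, nsmul_eq_mul]
      _ ≤ ∑ f ∈ B, ∏ i, w (f i) := by
          apply Finset.sum_le_sum
          intro f hf
          rw [hBdef, Finset.mem_filter] at hf
          rw [hexp_eq f]
          exact Real.exp_le_exp.2 hf.2.le
      _ ≤ ∑ f : Fin t → Ω, ∏ i, w (f i) := by
          apply Finset.sum_le_sum_of_subset_of_nonneg (Finset.filter_subset _ _)
          intro f _ _
          positivity
  -- assemble
  have hq4 : (0:ℝ) ≤ (t:ℝ)*q := by positivity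
  have hsum0 : (0:ℝ) ≤ ∑ x : Ω, w x := Finset.sum_nonneg (fun x _ => (hw0 x).le)
  have hpow : (∑ x : Ω, w x) ^ t ≤ (N * (1 + 2*q*(E-1))) ^ t :=
    pow_le_pow_left₀ hsum0 hw_sum t
  have hNE : (N * (1 + 2*q*(E-1))) ^ t ≤ N ^ t * Real.exp (2*q*(E-1)*(t:ℝ)) := by
    have h1 : 1 + 2*q*(E-1) ≤ Real.exp (2*q*(E-1)) := by
      have := Real.add_one_le_exp (2*q*(E-1))
      linarith
    have h0 : (0:ℝ) ≤ 1 + 2*q*(E-1) := by nlinarith [hq0, hE1]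
    calc (N * (1 + 2*q*(E-1))) ^ t = N ^ t * (1 + 2*q*(E-1)) ^ t := mul_pow _ _ _
      _ ≤ N ^ t * (Real.exp (2*q*(E-1))) ^ t := by
          apply mul_le_mul_of_nonneg_left _ (by positivity)
          exact pow_le_pow_left₀ h0 h1 t
      _ = N ^ t * Real.exp (2*q*(E-1)*(t:ℝ)) := by
          rw [← Real.exp_nat_mul]
          ring_nf
  have htotal : ((B.card : ℝ)) * Real.exp (4*(t:ℝ)*q)
      ≤ N ^ t * Real.exp (2*q*(E-1)*(t:ℝ)) := by
    calc ((B.card : ℝ)) * Real.exp (4*(t:ℝ)*q) ≤ ∑ f : Fin t → Ω, ∏ i, w (f i) := hmarkov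
      _ = (∑ x : Ω, w x) ^ t := hprod
      _ ≤ (N * (1 + 2*q*(E-1))) ^ t := hpow
      _ ≤ N ^ t * Real.exp (2*q*(E-1)*(t:ℝ)) := hNE
  have hB : ((B.card : ℝ)) ≤ N ^ t * Real.exp (2*q*(E-1)*(t:ℝ) - 4*(t:ℝ)*q) := by
    calc ((B.card : ℝ)) = ((B.card : ℝ)) * Real.exp (4*(t:ℝ)*q) / Real.exp (4*(t:ℝ)*q) := by
          field_simp
      _ ≤ N ^ t * Real.exp (2*q*(E-1)*(t:ℝ)) / Real.exp (4*(t:ℝ)*q) := by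
          gcongr
      _ = N ^ t * Real.exp (2*q*(E-1)*(t:ℝ) - 4*(t:ℝ)*q) := by
          rw [Real.exp_sub]
          ring
  refine le_trans hB ?_
  rw [mul_comm (Real.exp (-(t:ℝ)*q/3))]
  apply mul_le_mul_of_nonneg_left _ (by positivity)
  apply Real.exp_le_exp.2
  nlinarith [hq4, hEbound, hq0]

/-- For `t` independent uniformly random `s`-element subsets `S 1, …, S t` of a universe `U`
of size `k ≥ 1`, the probability that there exists some subset `T ⊆ U` such that more than
`4·t·exp(−α²·δ·s/3)` of the sets `S i` have an unusual intersection with `T` is at most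
`2^k · exp(−(t/3)·exp(−α²·δ·s/3))`.  The tuple `(S 1, …, S t)` of independent uniform
`s`-sets is modelled as a uniform element of the (finite) space of functions
`Fin t → {A : Finset U // A.card = s}`, and the probability is expressed by counting. -/
theorem exists_unusual_intersections_union_bound
    {U : Type*} [Fintype U] [DecidableEq U]
    (hk : 1 ≤ Fintype.card U)
    (α δ : ℝ) (hα0 : 0 < α) (hα1 : α < 1) (hδ0 : 0 < δ) (hδ1 : δ < 1)
    (s : ℕ) (hs1 : 1 ≤ s) (hsk : s ≤ Fintype.card U)
    (t : ℕ) :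
    (((univ : Finset (Fin t → {A : Finset U // A.card = s})).filter (fun S =>
        ∃ T : Finset U,
          4 * t * Real.exp (-(α ^ 2 * δ * s) / 3) <
            (((univ : Finset (Fin t)).filter
                (fun i => UnusualIntersection α δ s T (S i).1)).card : ℝ))).card : ℝ) /
      (Fintype.card (Fin t → {A : Finset U // A.card = s}) : ℝ)
      ≤ 2 ^ (Fintype.card U) *
          Real.exp (-((t : ℝ) / 3) * Real.exp (-(α ^ 2 * δ * s) / 3)) := by
  classical
  have hq0 : (0:ℝ) < Real.exp (-(α ^ 2 * δ * (s:ℝ)) / 3) := Real.exp_pos _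
  have hNnat : Fintype.card {A : Finset U // A.card = s} = (Fintype.card U).choose s :=
    Fintype.card_finset_len s
  have hN0 : 0 < (Fintype.card U).choose s := Nat.choose_pos hsk
  have hNR : (0:ℝ) < ((Fintype.card {A : Finset U // A.card = s}) : ℝ) := by
    rw [hNnat]; exact_mod_cast hN0
  -- per-T bound on tuple space
  have hperT : ∀ T : Finset U,
      (((univ : Finset (Fin t → {A : Finset U // A.card = s})).filter (fun S =>
          4*(t:ℝ)*Real.exp (-(α ^ 2 * δ * (s:ℝ)) / 3) < (((univ : Finset (Fin t)).filter
            (fun i => UnusualIntersection α δ s T (S i).1)).card : ℝ))).card : ℝ)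
        ≤ Real.exp (-(t:ℝ)*Real.exp (-(α ^ 2 * δ * (s:ℝ)) / 3)/3)
          * ((Fintype.card {A : Finset U // A.card = s} : ℝ))^t := by
    intro T
    apply chernoff_tuple (fun A : {A : Finset U // A.card = s} =>
      UnusualIntersection α δ s T A.1) t _ hq0
    rw [subtype_filter_card s (fun S => UnusualIntersection α δ s T S)]
    rw [hNnat]
    have h := bad_count α δ hα0 hα1 hδ0 hδ1 s hs1 hsk T
    calc ((((univ : Finset U).powersetCard s).filter
            (fun S => UnusualIntersection α δ s T S)).card : ℝ)
        ≤ 2 * Real.exp (-(α^2*δ*(s:ℝ))/3) * ((Fintype.card U).choose s : ℝ) := h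
      _ = 2 * Real.exp (-(α ^ 2 * δ * (s:ℝ)) / 3) * (((Fintype.card U).choose s : ℕ) : ℝ) := by
          norm_num
  -- union bound
  have hsub : ((univ : Finset (Fin t → {A : Finset U // A.card = s})).filter (fun S =>
        ∃ T : Finset U,
          4 * (t:ℝ) * Real.exp (-(α ^ 2 * δ * (s:ℝ)) / 3) <
            (((univ : Finset (Fin t)).filter
                (fun i => UnusualIntersection α δ s T (S i).1)).card : ℝ)))
      ⊆ ((univ : Finset U).powerset).biUnion (fun T =>
          (univ : Finset (Fin t → {A : Finset U // A.card = s})).filter (fun S =>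
            4*(t:ℝ)*Real.exp (-(α ^ 2 * δ * (s:ℝ)) / 3) < (((univ : Finset (Fin t)).filter
              (fun i => UnusualIntersection α δ s T (S i).1)).card : ℝ))) := by
    intro f hf
    rw [Finset.mem_filter] at hf
    obtain ⟨hfu, T, hT⟩ := hf
    rw [Finset.mem_biUnion]
    exact ⟨T, Finset.mem_powerset.2 (Finset.subset_univ T), Finset.mem_filter.2 ⟨hfu, hT⟩⟩
  have hcardsum : (((univ : Finset (Fin t → {A : Finset U // A.card = s})).filter (fun S =>
        ∃ T : Finset U,
          4 * (t:ℝ) * Real.exp (-(α ^ 2 * δ * (s:ℝ)) / 3) <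
            (((univ : Finset (Fin t)).filter
                (fun i => UnusualIntersection α δ s T (S i).1)).card : ℝ))).card : ℝ)
      ≤ ∑ T ∈ (univ : Finset U).powerset,
          (((univ : Finset (Fin t → {A : Finset U // A.card = s})).filter (fun S =>
            4*(t:ℝ)*Real.exp (-(α ^ 2 * δ * (s:ℝ)) / 3) < (((univ : Finset (Fin t)).filter
              (fun i => UnusualIntersection α δ s T (S i).1)).card : ℝ))).card : ℝ) := by
    have h1 := Finset.card_le_card hsub
    have h2 := Finset.card_biUnion_le (s := (univ : Finset U).powerset)
      (t := fun T => (univ : Finset (Fin t → {A : Finset U // A.card = s})).filter (fun S =>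
            4*(t:ℝ)*Real.exp (-(α ^ 2 * δ * (s:ℝ)) / 3) < (((univ : Finset (Fin t)).filter
              (fun i => UnusualIntersection α δ s T (S i).1)).card : ℝ)))
    have := le_trans h1 h2
    exact_mod_cast this
  have hsum2 : ∑ T ∈ (univ : Finset U).powerset,
          (((univ : Finset (Fin t → {A : Finset U // A.card = s})).filter (fun S =>
            4*(t:ℝ)*Real.exp (-(α ^ 2 * δ * (s:ℝ)) / 3) < (((univ : Finset (Fin t)).filter
              (fun i => UnusualIntersection α δ s T (S i).1)).card : ℝ))).card : ℝ)
      ≤ (2:ℝ) ^ (Fintype.card U) * (Real.exp (-(t:ℝ)*Real.exp (-(α ^ 2 * δ * (s:ℝ)) / 3)/3)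
          * ((Fintype.card {A : Finset U // A.card = s} : ℝ))^t) := by
    calc ∑ T ∈ (univ : Finset U).powerset, (((univ : Finset (Fin t →
              {A : Finset U // A.card = s})).filter (fun S =>
            4*(t:ℝ)*Real.exp (-(α ^ 2 * δ * (s:ℝ)) / 3) < (((univ : Finset (Fin t)).filter
              (fun i => UnusualIntersection α δ s T (S i).1)).card : ℝ))).card : ℝ)
        ≤ ∑ _T ∈ (univ : Finset U).powerset,
            (Real.exp (-(t:ℝ)*Real.exp (-(α ^ 2 * δ * (s:ℝ)) / 3)/3)
              * ((Fintype.card {A : Finset U // A.card = s} : ℝ))^t) :=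
          Finset.sum_le_sum (fun T _ => hperT T)
      _ = (2:ℝ) ^ (Fintype.card U) * (Real.exp (-(t:ℝ)*Real.exp (-(α ^ 2 * δ * (s:ℝ)) / 3)/3)
            * ((Fintype.card {A : Finset U // A.card = s} : ℝ))^t) := by
          rw [Finset.sum_const, Finset.card_powerset, Finset.card_univ, nsmul_eq_mul]
          push_cast
          ring
  -- finish : divide
  have hD : ((Fintype.card (Fin t → {A : Finset U // A.card = s})) : ℝ)
      = ((Fintype.card {A : Finset U // A.card = s} : ℝ))^t := by
    rw [Fintype.card_fun, Fintype.card_fin]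
    push_cast
    ring
  rw [hD, div_le_iff₀ (by positivity)]
  have hfinal := le_trans hcardsum hsum2
  calc (((univ : Finset (Fin t → {A : Finset U // A.card = s})).filter (fun S =>
        ∃ T : Finset U,
          4 * (t:ℝ) * Real.exp (-(α ^ 2 * δ * (s:ℝ)) / 3) <
            (((univ : Finset (Fin t)).filter
                (fun i => UnusualIntersection α δ s T (S i).1)).card : ℝ))).card : ℝ)
      ≤ (2:ℝ) ^ (Fintype.card U) * (Real.exp (-(t:ℝ)*Real.exp (-(α ^ 2 * δ * (s:ℝ)) / 3)/3)
          * ((Fintype.card {A : Finset U // A.card = s} : ℝ))^t) := hfinal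
    _ = 2 ^ (Fintype.card U) *
          Real.exp (-((t : ℝ) / 3) * Real.exp (-(α ^ 2 * δ * (s:ℝ)) / 3)) *
          ((Fintype.card {A : Finset U // A.card = s} : ℝ))^t := by
        rw [show -(t:ℝ)*Real.exp (-(α ^ 2 * δ * (s:ℝ)) / 3)/3
            = -((t : ℝ) / 3) * Real.exp (-(α ^ 2 * δ * (s:ℝ)) / 3) by ring]
        ring
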